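/- If there exists a stochastically sufficient coordinate set I with |I| ≤ k, then the set of relevant coordinates of the underlying static decision problem has cardinality at most k. -/
import Mathlib


/-- Full-information optimizer: actions maximizing pointwise utility at state `s`. -/
def Opt {n : ℕ} {A : Type*} {X : Fin n → Type*}
    (U : A → (∀ i, X i) → ℝ) (s : ∀ i, X i) : Set A :=
  {a | ∀ b, U b s ≤ U a s}

/-- Conditional (unnormalized) expected utility of action `a` over the `I`-fiber of `s`. -/
noncomputable def condEU {n : ℕ} {A : Type*} {X : Fin n → Type*}
    [∀ i, Fintype (X i)] [∀ i, DecidableEq (X i)]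
    (U : A → (∀ i, X i) → ℝ) (P : (∀ i, X i) → ℝ)
    (I : Finset (Fin n)) (s : ∀ i, X i) (a : A) : ℝ :=
  ∑ t ∈ Finset.univ.filter (fun t : ∀ i, X i => ∀ i ∈ I, t i = s i), P t * U a t

/-- Conditional optimizer: actions maximizing conditional expected utility on the `I`-fiber. -/
noncomputable def OptS {n : ℕ} {A : Type*} {X : Fin n → Type*}
    [∀ i, Fintype (X i)] [∀ i, DecidableEq (X i)]
    (U : A → (∀ i, X i) → ℝ) (P : (∀ i, X i) → ℝ)
    (I : Finset (Fin n)) (s : ∀ i, X i) : Set A :=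
  {a | ∀ b, condEU U P I s b ≤ condEU U P I s a}

/-- `I` is statically sufficient: states agreeing on `I` have the same optimizer. -/
def StaticSufficient {n : ℕ} {A : Type*} {X : Fin n → Type*}
    (U : A → (∀ i, X i) → ℝ) (I : Finset (Fin n)) : Prop :=
  ∀ s t : ∀ i, X i, (∀ i ∈ I, s i = t i) → Opt U s = Opt U t

/-- `I` is stochastically sufficient: the conditional optimizer agrees with the
full-information optimizer at every state. -/
def StochSufficient {n : ℕ} {A : Type*} {X : Fin n → Type*}
    [∀ i, Fintype (X i)] [∀ i, DecidableEq (X i)]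
    (U : A → (∀ i, X i) → ℝ) (P : (∀ i, X i) → ℝ) (I : Finset (Fin n)) : Prop :=
  ∀ s : ∀ i, X i, OptS U P I s = Opt U s

/-- `I` is stochastically decisive: every positive-probability state's observed fiber
has a unique conditional optimal action. -/
def StochDecisive {n : ℕ} {A : Type*} {X : Fin n → Type*}
    [∀ i, Fintype (X i)] [∀ i, DecidableEq (X i)]
    (U : A → (∀ i, X i) → ℝ) (P : (∀ i, X i) → ℝ) (I : Finset (Fin n)) : Prop :=
  ∀ s : ∀ i, X i, 0 < P s → ∃ a : A, OptS U P I s = {a}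

theorem stochastic_minimum_bounds_relevant_set
    {n : ℕ} {A : Type*} {X : Fin n → Type*}
    [Fintype A] [Nonempty A] [∀ i, Fintype (X i)] [∀ i, Nonempty (X i)]
    [∀ i, DecidableEq (X i)]
    (U : A → (∀ i, X i) → ℝ) (P : (∀ i, X i) → ℝ)
    (hP0 : ∀ s, 0 ≤ P s) (hP1 : ∑ s : ∀ i, X i, P s = 1)
    (k : ℕ)
    (hex : ∃ I : Finset (Fin n), I.card ≤ k ∧ StochSufficient U P I) :
    {i : Fin n | ∃ s t : ∀ j, X j,
        (∀ j : Fin n, j ≠ i → s j = t j) ∧ Opt U s ≠ Opt U t}.ncard ≤ k := by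
  obtain ⟨I, hIk, hS⟩ := hex
  have hsub : {i : Fin n | ∃ s t : ∀ j, X j,
      (∀ j : Fin n, j ≠ i → s j = t j) ∧ Opt U s ≠ Opt U t} ⊆ ↑I := by
    intro i hi
    obtain ⟨s, t, hst, hne⟩ := hi
    by_contra hiI
    apply hne
    rw [← hS s, ← hS t]
    have hfilter : (Finset.univ.filter fun x : ∀ j, X j => ∀ j ∈ I, x j = s j)
        = (Finset.univ.filter fun x : ∀ j, X j => ∀ j ∈ I, x j = t j) := by
      apply Finset.filter_congr
      intro x _
      constructor <;> intro h j hj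
      · rw [h j hj, hst j (fun e => hiI (e ▸ hj))]
      · rw [h j hj, hst j (fun e => hiI (e ▸ hj))]
    unfold OptS condEU
    rw [hfilter]
  calc {i : Fin n | ∃ s t : ∀ j, X j,
      (∀ j : Fin n, j ≠ i → s j = t j) ∧ Opt U s ≠ Opt U t}.ncard
      ≤ (↑I : Set (Fin n)).ncard := Set.ncard_le_ncard hsub I.finite_toSet
    _ = I.card := Set.ncard_coe_finset I
    _ ≤ k := hIk
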